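/- Let α ≥ 0, 0 < δ ≤ γ and B > 0. Let (β_{lk})_{l ≥ 0, 0 ≤ k < 2^l} be real numbers with |β_{lk}| ≤ B 2^{−l(γ + 1/2)} for all l, k, and let (u_{lk})_{l ≥ 0, 0 ≤ k < 2^l} be i.i.d. random variables uniformly distributed on [−B, B]. Then there exist constants c > 0 and ε0 ∈ (0,1), depending only on α, δ, γ, B, such that for all 0 < ε < ε0, P(Σ_{l=0}^∞ 2^{−2lα} Σ_{k=0}^{2^l − 1} |β_{lk} − 2^{−l(δ + 1/2)} u_{lk}|² ≤ ε²) ≥ exp(−c ε^{−1/(α+δ)} log(1/ε)). -/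

import Mathlib

open MeasureTheory ProbabilityTheory Real Filter
open scoped ENNReal NNReal RealInnerProductSpace

private lemma sum_two_pow_le'' (N : ℕ) : ∑ l ∈ Finset.range N, 2 ^ l ≤ 2 ^ N := by
  induction N with
  | zero => simp
  | succ n ih => rw [Finset.sum_range_succ, pow_succ]; omega

set_option maxHeartbeats 2000000 in
/-- small-ball lower bound for the uniform wavelet series.  With
`|β_{lk}| ≤ B 2^{−l(γ+1/2)}` and `u_{lk}` i.i.d. uniform on `[−B,B]`, for `0 < δ ≤ γ`, `α ≥ 0`:
`P(Σ_l 2^{−2lα} Σ_{k<2^l} |β_{lk} − 2^{−l(δ+1/2)} u_{lk}|² ≤ ε²) ≥ exp(−c ε^{−1/(α+δ)} log(1/ε))`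
for all sufficiently small `ε > 0`. -/
theorem uniform_wavelet_small_ball
    (α δ γ B : ℝ) (hα : 0 ≤ α) (hδ : 0 < δ) (hδγ : δ ≤ γ) (hB : 0 < B)
    (β : ℕ → ℕ → ℝ)
    (hβ : ∀ l k : ℕ, k < 2 ^ l → |β l k| ≤ B * (2 : ℝ) ^ (-(l : ℝ) * (γ + 1 / 2)))
    {Ω : Type*} [MeasurableSpace Ω] (P : Measure Ω) [IsProbabilityMeasure P]
    (u : ℕ × ℕ → Ω → ℝ) (humeas : ∀ p, Measurable (u p))
    (huindep : iIndepFun u P)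
    (hudist : ∀ p, Measure.map (u p) P
      = (ENNReal.ofReal (2 * B))⁻¹ • volume.restrict (Set.Icc (-B) B)) :
    ∃ c ε0 : ℝ, 0 < c ∧ 0 < ε0 ∧ ε0 < 1 ∧ ∀ ε : ℝ, 0 < ε → ε < ε0 →
      ENNReal.ofReal (Real.exp (-c * ε ^ (-1 / (α + δ)) * Real.log (1 / ε)))
        ≤ P {ω | ∑' l : ℕ, (2 : ℝ) ^ (-2 * (l : ℝ) * α) *
              ∑ k ∈ Finset.range (2 ^ l),
                (β l k - (2 : ℝ) ^ (-(l : ℝ) * (δ + 1 / 2)) * u (l, k) ω) ^ 2 ≤ ε ^ 2} := by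
  have hsum : 0 < α + δ := by linarith
  set r : ℝ := (2:ℝ) ^ (-(2*(α+δ))) with hrdef
  have hr0 : 0 < r := Real.rpow_pos_of_pos two_pos _
  have hr1 : r < 1 := Real.rpow_lt_one_of_one_lt_of_neg one_lt_two (by linarith)
  set S : ℝ := (1 - r)⁻¹ with hSdef
  have hS0 : 0 < S := inv_pos.2 (by linarith)
  set K : ℝ := 1 + Real.sqrt (8 * B^2 * S) with hKdef
  have hK1 : 1 ≤ K := le_add_of_nonneg_right (Real.sqrt_nonneg _)
  have hK0 : 0 < K := by linarith
  have hK2 : 8 * B^2 * S ≤ K^2 := by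
    nlinarith [Real.sq_sqrt (show (0:ℝ) ≤ 8*B^2*S by positivity), Real.sqrt_nonneg (8*B^2*S)]
  have hKpow : 0 < K ^ ((1:ℝ)/(α+δ)) := Real.rpow_pos_of_pos hK0 _
  clear_value r S K
  clear hKdef
  refine ⟨4 * K ^ ((1:ℝ)/(α+δ)), min (1/2) (1/K), by positivity, by positivity,
    lt_of_le_of_lt (min_le_left _ _) (by norm_num), ?_⟩
  intro ε hε hεlt
  have hεhalf : ε < 1/2 := lt_of_lt_of_le hεlt (min_le_left _ _)
  have hεK : ε < 1/K := lt_of_lt_of_le hεlt (min_le_right _ _)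
  have hε1 : ε < 1 := by linarith
  have hKε : K ≤ 1/ε := by
    rw [le_div_iff₀ hε]
    have := (lt_div_iff₀ hK0).1 hεK
    nlinarith
  have hKε1 : 1 < K / ε := by
    rw [lt_div_iff₀ hε]
    nlinarith [(lt_div_iff₀ hK0).1 hεK, hε, hK1]
  have hlogKε : 0 < Real.log (K/ε) := Real.log_pos hKε1
  have hlog2 : 0 < Real.log 2 := Real.log_pos one_lt_two
  set N : ℕ := ⌈Real.log (K/ε) / ((α+δ) * Real.log 2)⌉₊ with hNdef
  have hx0 : 0 ≤ Real.log (K/ε) / ((α+δ) * Real.log 2) :=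
    div_nonneg hlogKε.le (mul_pos hsum hlog2).le
  have hN_ge : Real.log (K/ε) / ((α+δ) * Real.log 2) ≤ (N:ℝ) := Nat.le_ceil _
  have hN_le : (N:ℝ) ≤ Real.log (K/ε) / ((α+δ) * Real.log 2) + 1 := (Nat.ceil_lt_add_one hx0).le
  clear_value N
  have hq0 : 0 < ε/K := div_pos hε hK0
  have hq1 : ε/K ≤ 1 := (div_le_one hK0).2 (by linarith)
  -- bound on 2^N
  have hεpow : 0 < ε ^ ((-1:ℝ) / (α + δ)) := Real.rpow_pos_of_pos hε _
  have h2N : ((2:ℝ)^N : ℝ) ≤ 2 * (K ^ ((1:ℝ)/(α+δ)) * ε ^ ((-1:ℝ)/(α+δ))) := by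
    have e1 : ((2:ℝ)^N : ℝ) = Real.exp (Real.log 2 * N) := by
      rw [← Real.rpow_natCast (2:ℝ) N, Real.rpow_def_of_pos two_pos]
    have e2 : (K/ε) ^ ((1:ℝ)/(α+δ)) = Real.exp (Real.log (K/ε) * ((1:ℝ)/(α+δ))) := by
      rw [Real.rpow_def_of_pos (by positivity)]
    have e3 : (K/ε) ^ ((1:ℝ)/(α+δ)) = K ^ ((1:ℝ)/(α+δ)) * ε ^ ((-1:ℝ)/(α+δ)) := by
      rw [Real.div_rpow hK0.le hε.le, neg_div, Real.rpow_neg hε.le, div_eq_mul_inv]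
    have hexp_le : Real.log 2 * N ≤ Real.log (K/ε) * ((1:ℝ)/(α+δ)) + Real.log 2 := by
      have h := mul_le_mul_of_nonneg_left hN_le hlog2.le
      calc Real.log 2 * N ≤ Real.log 2 * (Real.log (K/ε) / ((α+δ) * Real.log 2) + 1) := h
        _ = Real.log (K/ε) * ((1:ℝ)/(α+δ)) + Real.log 2 := by
            field_simp
    calc ((2:ℝ)^N : ℝ) = Real.exp (Real.log 2 * N) := e1
      _ ≤ Real.exp (Real.log (K/ε) * ((1:ℝ)/(α+δ)) + Real.log 2) := Real.exp_le_exp.2 hexp_le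
      _ = (K/ε) ^ ((1:ℝ)/(α+δ)) * 2 := by rw [Real.exp_add, e2, Real.exp_log two_pos]
      _ = 2 * (K ^ ((1:ℝ)/(α+δ)) * ε ^ ((-1:ℝ)/(α+δ))) := by rw [e3]; ring
  -- bound on r^N
  have hrN : r^N ≤ (ε/K)^2 := by
    have e1 : r^N = Real.exp ((-(2*(α+δ)) * Real.log 2) * N) := by
      rw [hrdef, ← Real.rpow_natCast ((2:ℝ) ^ (-(2*(α+δ)))) N,
        ← Real.rpow_mul (by norm_num), Real.rpow_def_of_pos two_pos]
      ring_nf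
    have e2 : (ε/K)^2 = Real.exp (Real.log (ε/K) * 2) := by
      rw [← Real.rpow_natCast (ε/K) 2, Real.rpow_def_of_pos hq0]
      norm_num
    have hlogq : Real.log (ε/K) = - Real.log (K/ε) := by
      rw [Real.log_div hε.ne' hK0.ne', Real.log_div hK0.ne' hε.ne']; ring
    rw [e1, e2, hlogq]
    apply Real.exp_le_exp.2
    have hmul : Real.log (K/ε) ≤ (N:ℝ) * ((α+δ) * Real.log 2) := by
      rw [div_le_iff₀ (by positivity)] at hN_ge
      linarith
    linarith
  -- the accuracy η
  set η : ℝ := 2*B*ε/K with hηdef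
  have hη0 : 0 < η := by positivity
  have hηB : η ≤ B := by
    rw [hηdef, div_le_iff₀ hK0]
    have h2ε : 2*ε ≤ 1 := by linarith
    calc 2*B*ε = B*(2*ε) := by ring
      _ ≤ B*1 := mul_le_mul_of_nonneg_left h2ε hB.le
      _ ≤ B*K := mul_le_mul_of_nonneg_left hK1 hB.le
  have hηq : η/(2*B) = ε/K := by
    rw [hηdef, div_div, show K*(2*B) = (2*B)*K by ring, show 2*B*ε = (2*B)*ε by ring,
      mul_div_mul_left _ _ (show (2*B) ≠ 0 by positivity)]
  have hη2S : η^2 * S ≤ ε^2/2 := by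
    have hk : η^2 * K^2 = 4*B^2*ε^2 := by
      rw [hηdef, div_pow, div_mul_cancel₀ _ (pow_ne_zero 2 hK0.ne')]; ring
    have e : 2*(η^2*S)*K^2 = 8*B^2*S*ε^2 := by linear_combination (2*S) * hk
    have e2 : 8*B^2*S*ε^2 ≤ K^2*ε^2 := by
      calc 8*B^2*S*ε^2 = (8*B^2*S)*ε^2 := by ring
        _ ≤ K^2*ε^2 := mul_le_mul_of_nonneg_right hK2 (sq_nonneg ε)
    have e3 : 2*(η^2*S) ≤ ε^2 :=
      le_of_mul_le_mul_right (by linarith) (by positivity : (0:ℝ) < K^2)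
    linarith
  clear_value η
  -- the centers
  set m : ℕ×ℕ → ℝ := fun p => (2:ℝ)^((p.1:ℝ)*(δ+1/2)) * β p.1 p.2 with hmdef
  have hm : ∀ p : ℕ×ℕ, p.2 < 2^p.1 → |m p| ≤ B := by
    rintro ⟨l, k⟩ hk
    have h2p : (0:ℝ) < (2:ℝ)^((l:ℝ)*(δ+1/2)) := Real.rpow_pos_of_pos two_pos _
    calc |m (l,k)| = |(2:ℝ)^((l:ℝ)*(δ+1/2)) * β l k| := by rw [hmdef]
      _ = (2:ℝ)^((l:ℝ)*(δ+1/2)) * |β l k| := by rw [abs_mul, abs_of_pos h2p]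
      _ ≤ (2:ℝ)^((l:ℝ)*(δ+1/2)) * (B * (2:ℝ)^(-(l:ℝ)*(γ+1/2))) :=
          mul_le_mul_of_nonneg_left (hβ l k hk) h2p.le
      _ = B * (2:ℝ)^((l:ℝ)*(δ+1/2) + (-(l:ℝ)*(γ+1/2))) := by
          rw [Real.rpow_add two_pos]; ring
      _ ≤ B * 1 := by
          apply mul_le_mul_of_nonneg_left _ hB.le
          apply Real.rpow_le_one_of_one_le_of_nonpos one_le_two
          nlinarith [Nat.cast_nonneg (α := ℝ) l]
      _ = B := mul_one B
  -- the index set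
  set idx : Finset (ℕ×ℕ) :=
    (Finset.range N).biUnion (fun l => (Finset.range (2^l)).image fun k => (l,k)) with hidxdef
  have hmem : ∀ p : ℕ×ℕ, p ∈ idx ↔ p.1 < N ∧ p.2 < 2^p.1 := by
    rintro ⟨l, k⟩
    simp only [hidxdef, Finset.mem_biUnion, Finset.mem_image, Finset.mem_range]
    constructor
    · rintro ⟨a, ha, b, hb, heq⟩
      obtain ⟨rfl, rfl⟩ : a = l ∧ b = k := by
        simpa [Prod.ext_iff] using heq
      exact ⟨ha, hb⟩
    · rintro ⟨hl, hk⟩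
      exact ⟨l, hl, k, hk, rfl⟩
  have hcard : idx.card ≤ 2^N := by
    calc idx.card ≤ ∑ l ∈ Finset.range N, ((Finset.range (2^l)).image fun k => (l,k)).card :=
        Finset.card_biUnion_le
      _ ≤ ∑ l ∈ Finset.range N, 2^l :=
        Finset.sum_le_sum fun l _ => le_trans Finset.card_image_le (by simp)
      _ ≤ 2^N := sum_two_pow_le'' N
  -- events
  set A : Set Ω := ⋂ p ∈ idx, u p ⁻¹' Set.Icc (m p - η) (m p + η) with hAdef
  set G : Set Ω := ⋂ p : ℕ×ℕ, u p ⁻¹' Set.Icc (-B) B with hGdef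
  have hmap : ∀ p (t : Set ℝ), MeasurableSet t →
      P (u p ⁻¹' t) = (ENNReal.ofReal (2*B))⁻¹ * volume (t ∩ Set.Icc (-B) B) := by
    intro p t ht
    rw [← Measure.map_apply (humeas p) ht, hudist p, Measure.smul_apply,
      Measure.restrict_apply ht, smul_eq_mul]
  have hGnull : P Gᶜ = 0 := by
    rw [hGdef, Set.compl_iInter]
    refine measure_iUnion_null fun p => ?_
    have h1 : P (u p ⁻¹' Set.Icc (-B) B) = 1 := by
      rw [hmap p _ measurableSet_Icc, Set.inter_self, Real.volume_Icc,
        show B - -B = 2*B by ring]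
      exact ENNReal.inv_mul_cancel (ENNReal.ofReal_pos.2 (by linarith)).ne' ENNReal.ofReal_ne_top
    rw [measure_compl ((humeas p) measurableSet_Icc) (measure_ne_top _ _), h1, measure_univ]
    simp
  -- single coordinate probability
  have hsingle : ∀ p ∈ idx,
      ENNReal.ofReal (ε/K) ≤ P (u p ⁻¹' Set.Icc (m p - η) (m p + η)) := by
    intro p hp
    obtain ⟨hpl, hpk⟩ := (hmem p).1 hp
    have hmB := abs_le.1 (hm p hpk)
    rw [hmap p _ measurableSet_Icc, Set.Icc_inter_Icc, Real.volume_Icc]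
    have hlen : η ≤ (m p + η) ⊓ B - (m p - η) ⊔ (-B) := by
      rcases le_total (m p) 0 with h|h
      · have h1 : m p + η ≤ B := by linarith
        have h2 : (m p - η) ⊔ (-B) ≤ m p := max_le (by linarith) hmB.1
        rw [min_eq_left h1]; linarith
      · have h1 : -B ≤ m p - η := by linarith
        have h2 : m p ≤ (m p + η) ⊓ B := le_min (by linarith) hmB.2
        rw [max_eq_left h1]; linarith
    calc ENNReal.ofReal (ε/K) = (ENNReal.ofReal (2*B))⁻¹ * ENNReal.ofReal η := by
          rw [← hηq, ENNReal.ofReal_div_of_pos (by linarith), ENNReal.div_eq_inv_mul]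
      _ ≤ (ENNReal.ofReal (2*B))⁻¹ *
            ENNReal.ofReal ((m p + η) ⊓ B - (m p - η) ⊔ (-B)) := by
          gcongr
  -- product formula
  have hprod : P A = ∏ p ∈ idx, P (u p ⁻¹' Set.Icc (m p - η) (m p + η)) := by
    rw [hAdef]
    exact huindep.meas_biInter (fun p _ => ⟨Set.Icc (m p - η) (m p + η), measurableSet_Icc, rfl⟩)
  -- inclusion of the event
  have hsub : A ∩ G ⊆ {ω | ∑' l : ℕ, (2 : ℝ) ^ (-2 * (l : ℝ) * α) *
      ∑ k ∈ Finset.range (2 ^ l),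
        (β l k - (2 : ℝ) ^ (-(l : ℝ) * (δ + 1 / 2)) * u (l, k) ω) ^ 2 ≤ ε ^ 2} := by
    rintro ω ⟨hA, hG⟩
    simp only [Set.mem_setOf_eq]
    have hu_close : ∀ p ∈ idx, |m p - u p ω| ≤ η := by
      intro p hp
      rw [hAdef] at hA
      have h := Set.mem_iInter₂.1 hA p hp
      rw [Set.mem_preimage, Set.mem_Icc] at h
      exact abs_le.2 ⟨by linarith [h.2], by linarith [h.1]⟩
    have hu_bdd : ∀ p, |u p ω| ≤ B := by
      intro p
      rw [hGdef] at hG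
      have h := Set.mem_iInter.1 hG p
      rw [Set.mem_preimage, Set.mem_Icc] at h
      exact abs_le.2 h
    set f : ℕ → ℝ := fun l => (2 : ℝ) ^ (-2 * (l : ℝ) * α) *
      ∑ k ∈ Finset.range (2 ^ l),
        (β l k - (2 : ℝ) ^ (-(l : ℝ) * (δ + 1 / 2)) * u (l, k) ω) ^ 2 with hfdef
    have halg : ∀ l : ℕ, (2:ℝ)^(-2*(l:ℝ)*α) * ((2:ℝ)^l * ((2:ℝ)^(-(l:ℝ)*(δ+1/2)))^2) = r^l := by
      intro l
      rw [hrdef, ← Real.rpow_natCast ((2:ℝ) ^ (-(2*(α+δ)))) l, ← Real.rpow_natCast (2:ℝ) l,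
        ← Real.rpow_natCast ((2:ℝ) ^ (-(l:ℝ) * (δ + 1/2))) 2,
        ← Real.rpow_mul (by norm_num), ← Real.rpow_mul (by norm_num),
        ← Real.rpow_add (by norm_num), ← Real.rpow_add (by norm_num)]
      congr 1
      push_cast
      ring
    have key : ∀ (l : ℕ) (c : ℝ), 0 ≤ c →
        (∀ k, k < 2^l → (β l k - (2:ℝ)^(-(l:ℝ)*(δ+1/2)) * u (l,k) ω)^2
          ≤ ((2:ℝ)^(-(l:ℝ)*(δ+1/2)))^2 * c) → f l ≤ c * r^l := by
      intro l c hc hterm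
      have hsum_le : ∑ k ∈ Finset.range (2^l),
          (β l k - (2:ℝ)^(-(l:ℝ)*(δ+1/2)) * u (l,k) ω)^2
          ≤ (2^l : ℕ) * (((2:ℝ)^(-(l:ℝ)*(δ+1/2)))^2 * c) := by
        calc ∑ k ∈ Finset.range (2^l), (β l k - (2:ℝ)^(-(l:ℝ)*(δ+1/2)) * u (l,k) ω)^2
            ≤ ∑ _k ∈ Finset.range (2^l), ((2:ℝ)^(-(l:ℝ)*(δ+1/2)))^2 * c :=
              Finset.sum_le_sum fun k hk => hterm k (Finset.mem_range.1 hk)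
          _ = (2^l : ℕ) * (((2:ℝ)^(-(l:ℝ)*(δ+1/2)))^2 * c) := by
              rw [Finset.sum_const, Finset.card_range, nsmul_eq_mul]
      calc f l ≤ (2:ℝ)^(-2*(l:ℝ)*α) * ((2^l : ℕ) * (((2:ℝ)^(-(l:ℝ)*(δ+1/2)))^2 * c)) := by
            rw [hfdef]
            exact mul_le_mul_of_nonneg_left hsum_le (Real.rpow_nonneg (by norm_num) _)
        _ = ((2:ℝ)^(-2*(l:ℝ)*α) * ((2:ℝ)^l * ((2:ℝ)^(-(l:ℝ)*(δ+1/2)))^2)) * c := by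
            push_cast; ring
        _ = r^l * c := by rw [halg l]
        _ = c * r^l := mul_comm _ _
    have hhead : ∀ l, l < N → f l ≤ η^2 * r^l := by
      intro l hl
      apply key l (η^2) (sq_nonneg η)
      intro k hk
      have hpmem : (l,k) ∈ idx := (hmem (l,k)).2 ⟨hl, hk⟩
      have hβm : β l k = (2:ℝ)^(-(l:ℝ)*(δ+1/2)) * m (l,k) := by
        rw [hmdef]
        show β l k = (2:ℝ)^(-(l:ℝ)*(δ+1/2)) * ((2:ℝ)^((l:ℝ)*(δ+1/2)) * β l k)
        rw [← mul_assoc, ← Real.rpow_add two_pos,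
          show -(l:ℝ)*(δ+1/2) + (l:ℝ)*(δ+1/2) = 0 by ring, Real.rpow_zero, one_mul]
      have hdiff : (β l k - (2:ℝ)^(-(l:ℝ)*(δ+1/2)) * u (l,k) ω)^2
          = ((2:ℝ)^(-(l:ℝ)*(δ+1/2)))^2 * (m (l,k) - u (l,k) ω)^2 := by
        rw [hβm]; ring
      rw [hdiff]
      apply mul_le_mul_of_nonneg_left _ (sq_nonneg _)
      have h := hu_close (l,k) hpmem
      have h' := abs_le.1 h
      nlinarith [h'.1, h'.2]
    have htail : ∀ l, N ≤ l → f l ≤ (4*B^2) * r^l := by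
      intro l _
      apply key l (4*B^2) (by positivity)
      intro k hk
      have h2p : (0:ℝ) < (2:ℝ)^(-(l:ℝ)*(δ+1/2)) := Real.rpow_pos_of_pos two_pos _
      have habs : |β l k - (2:ℝ)^(-(l:ℝ)*(δ+1/2)) * u (l,k) ω|
          ≤ (2:ℝ)^(-(l:ℝ)*(δ+1/2)) * (2*B) := by
        calc |β l k - (2:ℝ)^(-(l:ℝ)*(δ+1/2)) * u (l,k) ω|
            ≤ |β l k| + |(2:ℝ)^(-(l:ℝ)*(δ+1/2)) * u (l,k) ω| := abs_sub _ _
          _ ≤ B * (2:ℝ)^(-(l:ℝ)*(γ+1/2)) + (2:ℝ)^(-(l:ℝ)*(δ+1/2)) * B := by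
              apply add_le_add (hβ l k hk)
              rw [abs_mul, abs_of_pos h2p]
              exact mul_le_mul_of_nonneg_left (hu_bdd (l,k)) h2p.le
          _ ≤ B * (2:ℝ)^(-(l:ℝ)*(δ+1/2)) + (2:ℝ)^(-(l:ℝ)*(δ+1/2)) * B := by
              refine add_le_add ?_ le_rfl
              apply mul_le_mul_of_nonneg_left _ hB.le
              apply Real.rpow_le_rpow_of_exponent_le one_le_two
              nlinarith [Nat.cast_nonneg (α := ℝ) l]
          _ = (2:ℝ)^(-(l:ℝ)*(δ+1/2)) * (2*B) := by ring
      have h' := abs_le.1 habs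
      calc (β l k - (2:ℝ)^(-(l:ℝ)*(δ+1/2)) * u (l,k) ω)^2
          ≤ ((2:ℝ)^(-(l:ℝ)*(δ+1/2)) * (2*B))^2 := sq_le_sq' h'.1 h'.2
        _ = ((2:ℝ)^(-(l:ℝ)*(δ+1/2)))^2 * (4*B^2) := by ring
    have hgeo : Summable (fun l : ℕ => r^l) := summable_geometric_of_lt_one hr0.le hr1
    have hgeoS : ∑' l : ℕ, r^l = S := by rw [tsum_geometric_of_lt_one hr0.le hr1, hSdef]
    have hf0 : ∀ l, 0 ≤ f l := fun l =>
      mul_nonneg (Real.rpow_nonneg (by norm_num) _) (Finset.sum_nonneg fun k _ => sq_nonneg _)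
    have hfle : ∀ l, f l ≤ (η^2 + 4*B^2) * r^l := by
      intro l
      rcases lt_or_ge l N with h|h
      · exact (hhead l h).trans (mul_le_mul_of_nonneg_right (by nlinarith [sq_nonneg B])
          (pow_nonneg hr0.le l))
      · exact (htail l h).trans (mul_le_mul_of_nonneg_right (by nlinarith [sq_nonneg η])
          (pow_nonneg hr0.le l))
    have hfs : Summable f := Summable.of_nonneg_of_le hf0 hfle (hgeo.mul_left _)
    have hsplit : ∑' l, f l = ∑ l ∈ Finset.range N, f l + ∑' j, f (j + N) :=
      (hfs.sum_add_tsum_nat_add N).symm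
    have h1 : ∑ l ∈ Finset.range N, f l ≤ η^2 * S := by
      have hgeo_partial : ∑ l ∈ Finset.range N, r^l ≤ S := by
        have h := Summable.sum_le_tsum (Finset.range N) (fun i _ => pow_nonneg hr0.le i) hgeo
        rwa [hgeoS] at h
      calc ∑ l ∈ Finset.range N, f l ≤ ∑ l ∈ Finset.range N, η^2 * r^l :=
          Finset.sum_le_sum fun l hl => hhead l (Finset.mem_range.1 hl)
        _ = η^2 * ∑ l ∈ Finset.range N, r^l := by rw [Finset.mul_sum]
        _ ≤ η^2 * S := mul_le_mul_of_nonneg_left hgeo_partial (sq_nonneg η)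
    have h2 : ∑' j, f (j + N) ≤ (4*B^2) * r^N * S := by
      have hterm : ∀ j : ℕ, f (j + N) ≤ (4*B^2) * r^N * r^j := by
        intro j
        have h := htail (j + N) (by omega)
        rw [pow_add] at h
        calc f (j + N) ≤ 4*B^2 * (r^j * r^N) := h
          _ = (4*B^2) * r^N * r^j := by ring
      have h2a : ∑' j, f (j + N) ≤ ∑' j : ℕ, (4*B^2) * r^N * r^j :=
        Summable.tsum_le_tsum hterm ((summable_nat_add_iff N).2 hfs) (hgeo.mul_left _)
      calc ∑' j, f (j + N) ≤ ∑' j : ℕ, (4*B^2) * r^N * r^j := h2a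
        _ = (4*B^2) * r^N * ∑' j : ℕ, r^j := tsum_mul_left
        _ = (4*B^2) * r^N * S := by rw [hgeoS]
    have htail2 : (4*B^2) * r^N * S ≤ ε^2/2 := by
      have hq2 : (ε/K)^2 * K^2 = ε^2 := by
        rw [div_pow, div_mul_cancel₀ _ (pow_ne_zero 2 hK0.ne')]
      have hstep : (4*B^2) * r^N * S ≤ (4*B^2) * (ε/K)^2 * S := by
        apply mul_le_mul_of_nonneg_right _ hS0.le
        exact mul_le_mul_of_nonneg_left hrN (by positivity)
      refine hstep.trans ?_
      have e : 2*((4*B^2) * (ε/K)^2 * S)*K^2 = 8*B^2*S*ε^2 := by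
        linear_combination (8*B^2*S) * hq2
      have e2 : 8*B^2*S*ε^2 ≤ K^2*ε^2 := by
        calc 8*B^2*S*ε^2 = (8*B^2*S)*ε^2 := by ring
          _ ≤ K^2*ε^2 := mul_le_mul_of_nonneg_right hK2 (sq_nonneg ε)
      have e3 : 2*((4*B^2) * (ε/K)^2 * S) ≤ ε^2 :=
        le_of_mul_le_mul_right (by linarith) (by positivity : (0:ℝ) < K^2)
      linarith
    calc ∑' l, f l = ∑ l ∈ Finset.range N, f l + ∑' j, f (j + N) := hsplit
      _ ≤ η^2 * S + (4*B^2) * r^N * S := add_le_add h1 h2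
      _ ≤ ε^2/2 + ε^2/2 := add_le_add hη2S htail2
      _ = ε^2 := by ring
  -- real-valued final inequality
  have hreal : Real.exp (-(4 * K ^ ((1:ℝ)/(α+δ))) * ε ^ (-1 / (α + δ)) * Real.log (1 / ε))
      ≤ (ε/K)^(2^N : ℕ) := by
    have hrhs : (ε/K : ℝ)^(2^N : ℕ) = Real.exp (Real.log (ε/K) * (2^N : ℕ)) := by
      rw [← Real.rpow_natCast (ε/K) (2^N), Real.rpow_def_of_pos hq0]
    rw [hrhs]
    apply Real.exp_le_exp.2
    have hlogq : Real.log (ε/K) = -(Real.log K + Real.log (1/ε)) := by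
      rw [Real.log_div hε.ne' hK0.ne', one_div, Real.log_inv]; ring
    have hL0 : 0 < Real.log (1/ε) := Real.log_pos (by rw [lt_div_iff₀ hε]; linarith)
    have hlogK_le : Real.log K ≤ Real.log (1/ε) := Real.log_le_log hK0 hKε
    have hlogK0 : 0 ≤ Real.log K := Real.log_nonneg hK1
    have hcast : ((2^N : ℕ) : ℝ) = (2:ℝ)^N := by push_cast; ring
    rw [hlogq, hcast]
    have hεpow' : ε ^ ((-1:ℝ) / (α + δ)) = ε ^ (-1 / (α + δ)) := by norm_num
    have hmain : (2:ℝ)^N * (Real.log K + Real.log (1/ε))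
        ≤ (2 * (K ^ ((1:ℝ)/(α+δ)) * ε ^ ((-1:ℝ)/(α+δ)))) * (2 * Real.log (1/ε)) := by
      apply mul_le_mul h2N (by linarith) (by linarith) (by positivity)
    rw [hεpow'] at hmain
    nlinarith [hmain]
  -- assemble
  calc ENNReal.ofReal (Real.exp (-(4 * K ^ ((1:ℝ)/(α+δ))) * ε ^ (-1 / (α + δ)) * Real.log (1 / ε)))
      ≤ ENNReal.ofReal ((ε/K)^(2^N : ℕ)) := ENNReal.ofReal_le_ofReal hreal
    _ ≤ ENNReal.ofReal ((ε/K)^idx.card) :=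
        ENNReal.ofReal_le_ofReal (pow_le_pow_of_le_one hq0.le hq1 hcard)
    _ = ∏ _p ∈ idx, ENNReal.ofReal (ε/K) := by
        rw [Finset.prod_const, ← ENNReal.ofReal_pow hq0.le]
    _ ≤ ∏ p ∈ idx, P (u p ⁻¹' Set.Icc (m p - η) (m p + η)) := Finset.prod_le_prod' hsingle
    _ = P A := hprod.symm
    _ = P (A ∩ G) := (measure_inter_conull hGnull).symm
    _ ≤ P {ω | ∑' l : ℕ, (2 : ℝ) ^ (-2 * (l : ℝ) * α) *
          ∑ k ∈ Finset.range (2 ^ l),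
            (β l k - (2 : ℝ) ^ (-(l : ℝ) * (δ + 1 / 2)) * u (l, k) ω) ^ 2 ≤ ε ^ 2} :=
        measure_mono hsub
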